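/- Let n ≥ 2 be such that every prime divisor of n is at least 7. Then every sequence of length 3^{Ω(n)} in Z_n has a nonempty subsequence of consecutive terms which is a U(n)^2-weighted zero-sum sequence; that is, C_{U(n)^2}(n) ≤ 3^{Ω(n)} (and hence, combined with the lower bound, C_{U(n)^2}(n) = 3^{Ω(n)}). -/

import Mathlib

/-- A list `L` over `ZMod n` is an `A`-weighted zero-sum sequence if there are weights
`a₁, …, a_k ∈ A` (one per term) with `a₁x₁ + ⋯ + a_kx_k = 0`. -/
def IsWeightedZeroSum {n : ℕ} (A : Set (ZMod n)) (L : List (ZMod n)) : Prop :=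
  ∃ a : List (ZMod n), a.length = L.length ∧ (∀ w ∈ a, w ∈ A) ∧
    (List.zipWith (· * ·) a L).sum = 0

/-- `L` has a nonempty subsequence of consecutive terms which is an
`A`-weighted zero-sum sequence. -/
def HasConsecWZS {n : ℕ} (A : Set (ZMod n)) (L : List (ZMod n)) : Prop :=
  ∃ l₁ l₂ l₃ : List (ZMod n), L = l₁ ++ l₂ ++ l₃ ∧ l₂ ≠ [] ∧ IsWeightedZeroSum A l₂


private def WChain : ℕ → (ℤ → Prop) → List ℤ → Prop
  | 0, _, _ => True
  | m+1, P, X => ∃ A b R, X = A ++ b :: R ∧ P b ∧ WChain m P R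

private def wsum (s X : List ℤ) : ℤ := (List.zipWith (fun a x => a * a * x) s X).sum

private lemma wsum_nil_left (X : List ℤ) : wsum [] X = 0 := by simp [wsum]

private lemma wsum_cons (a x : ℤ) (s X : List ℤ) :
    wsum (a :: s) (x :: X) = a * a * x + wsum s X := by simp [wsum]

private lemma wsum_append {s₁ X₁ : List ℤ} (s₂ X₂ : List ℤ) (h : s₁.length = X₁.length) :
    wsum (s₁ ++ s₂) (X₁ ++ X₂) = wsum s₁ X₁ + wsum s₂ X₂ := by
  simp [wsum, List.zipWith_append h]

private lemma wsum_replicate_one (X : List ℤ) :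
    wsum (List.replicate X.length 1) X = X.sum := by
  induction X with
  | nil => simp [wsum]
  | cons x X ih => simpa [List.replicate_succ, wsum_cons] using ih

private lemma wsum_map_mul (c : ℤ) (s X : List ℤ) :
    wsum s (X.map (fun y => c * y)) = c * wsum s X := by
  induction s generalizing X with
  | nil => simp [wsum]
  | cons a s ih =>
    cases X with
    | nil => simp [wsum]
    | cons x X => simp [wsum_cons, ih]; ring

private lemma dvd_wsum_sub (d : ℤ) (g : ℤ → ℤ → ℤ) (h : ∀ a b, d ∣ g a b - a) :
    ∀ l₁ l₂ X : List ℤ, l₁.length = X.length → l₂.length = X.length →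
      d ∣ wsum (List.zipWith g l₁ l₂) X - wsum l₁ X := by
  intro l₁
  induction l₁ with
  | nil => intro l₂ X _ _; simp [wsum]
  | cons a l₁ ih =>
    intro l₂ X h₁ h₂
    cases X with
    | nil => simp at h₁
    | cons x X =>
      cases l₂ with
      | nil => simp at h₂
      | cons b l₂ =>
        rw [List.zipWith_cons_cons, wsum_cons, wsum_cons]
        have h1 : d ∣ (g a b * g a b * x - a * a * x) := by
          obtain ⟨e, he⟩ := h a b
          exact ⟨e * (g a b + a) * x, by linear_combination (x * (g a b + a)) * he⟩
        have h2 := ih l₂ X (by simpa using h₁) (by simpa using h₂)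
        obtain ⟨e₁, he₁⟩ := h1; obtain ⟨e₂, he₂⟩ := h2
        exact ⟨e₁ + e₂, by linear_combination he₁ + he₂⟩

private lemma mem_zipWith {g : ℤ → ℤ → ℤ} :
    ∀ {l₁ l₂ : List ℤ} {w : ℤ}, w ∈ List.zipWith g l₁ l₂ →
      ∃ a b, a ∈ l₁ ∧ b ∈ l₂ ∧ w = g a b := by
  intro l₁
  induction l₁ with
  | nil => intro l₂ w h; simp at h
  | cons a l₁ ih =>
    intro l₂ w h
    cases l₂ with
    | nil => simp at h
    | cons b l₂ =>
      rw [List.zipWith_cons_cons, List.mem_cons] at h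
      rcases h with h | h
      · exact ⟨a, b, List.mem_cons_self, List.mem_cons_self, h⟩
      · obtain ⟨a', b', ha, hb, hw⟩ := ih h
        exact ⟨a', b', List.mem_cons_of_mem _ ha, List.mem_cons_of_mem _ hb, hw⟩



private lemma firstSplit (P : ℤ → Prop) :
    ∀ L : List ℤ, (∃ y ∈ L, P y) → ∃ A b R, L = A ++ b :: R ∧ P b ∧ ∀ y ∈ A, ¬ P y := by
  intro L
  induction L with
  | nil => rintro ⟨y, hy, -⟩; simp at hy
  | cons a L ih =>
    intro h
    by_cases hPa : P a
    · exact ⟨[], a, L, by simp, hPa, by simp⟩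
    · obtain ⟨y, hy, hPy⟩ := h
      rcases List.mem_cons.mp hy with rfl | hy'
      · exact absurd hPy hPa
      · obtain ⟨A, b, R, hL, hPb, hA⟩ := ih ⟨y, hy', hPy⟩
        refine ⟨a :: A, b, R, by simp [hL], hPb, ?_⟩
        intro z hz
        rcases List.mem_cons.mp hz with rfl | hz'
        · exact hPa
        · exact hA z hz'

private lemma splitAux (P : ℤ → Prop) :
    ∀ (B : ℕ) (L : List ℤ), ¬ WChain (B+1) P L →
      ∃ i k, i + k ≤ L.length ∧ L.length + 1 ≤ (B+1) * (k+1) ∧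
        ∀ y ∈ (L.drop i).take k, ¬ P y := by
  intro B
  induction B with
  | zero =>
    intro L hL
    refine ⟨0, L.length, by simp, by simp, ?_⟩
    intro y hy hPy
    simp only [List.drop_zero, List.take_length] at hy
    exact hL ((firstSplit P L ⟨y, hy, hPy⟩).imp fun A ⟨b, R, h1, h2, _⟩ => ⟨b, R, h1, h2, trivial⟩)
  | succ B ih =>
    intro L hL
    by_cases hex : ∃ y ∈ L, P y
    case neg =>
      push_neg at hex
      exact ⟨0, L.length, by simp, by nlinarith [L.length], by simpa using hex⟩
    case pos =>
      obtain ⟨A, b, R, hLd, hPb, hA⟩ := firstSplit P L hex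
      have hR : ¬ WChain (B+1) P R := fun hc => hL ⟨A, b, R, hLd, hPb, hc⟩
      obtain ⟨i', k', hik', hbound', hfree'⟩ := ih R hR
      have hlen : L.length = A.length + 1 + R.length := by simp [hLd]; omega
      by_cases hcmp : k' ≤ A.length
      · refine ⟨0, A.length, by omega, ?_, ?_⟩
        · have h1 : (B+1) * (k'+1) ≤ (B+1) * (A.length+1) :=
            Nat.mul_le_mul_left _ (by omega)
          nlinarith
        · intro y hy
          apply hA
          simp only [List.drop_zero] at hy
          rw [hLd, List.take_left] at hy; exact hy
      · refine ⟨A.length + 1 + i', k', by omega, by nlinarith, ?_⟩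
        intro y hy
        apply hfree' y
        have hdrop : L.drop (A.length + 1 + i') = R.drop i' := by
          rw [hLd, show A ++ b :: R = (A ++ [b]) ++ R by simp, ← List.drop_drop,
            List.drop_left' (by simp)]
        rwa [hdrop] at hy


open Finset in
private lemma jacobi_aux (p : ℕ) [Fact p.Prime] (hp7 : 7 ≤ p) (c : ZMod p) (hc : c ≠ 0) :
    ∑ x : ZMod p, (quadraticChar (ZMod p)) (x * (c - x)) = -(quadraticChar (ZMod p)) (-1) := by
  have hchar : ringChar (ZMod p) ≠ 2 := by
    rw [ZMod.ringChar_zmod_n]; omega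
  set χ := quadraticChar (ZMod p) with hχ
  have step1 : ∑ x : ZMod p, χ (x * (c - x)) = ∑ x ∈ univ.erase (0 : ZMod p), χ (c * x⁻¹ - 1) := by
    rw [← Finset.add_sum_erase _ _ (mem_univ (0 : ZMod p))]
    rw [show (0 : ZMod p) * (c - 0) = 0 by ring, quadraticChar_zero, zero_add]
    apply Finset.sum_congr rfl
    intro x hx
    have hx0 : x ≠ 0 := (Finset.mem_erase.mp hx).1
    have key : x * (c - x) = x^2 * (c * x⁻¹ - 1) := by
      field_simp
    rw [key, map_mul, quadraticChar_sq_one' hx0, one_mul]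
  have step2 : ∑ x ∈ univ.erase (0 : ZMod p), χ (c * x⁻¹ - 1)
      = ∑ y ∈ univ.erase (0 : ZMod p), χ (y - 1) := by
    apply Finset.sum_nbij' (fun x => c * x⁻¹) (fun y => c * y⁻¹)
    · intro x hx
      have hx0 : x ≠ 0 := (Finset.mem_erase.mp hx).1
      exact Finset.mem_erase.mpr ⟨mul_ne_zero hc (inv_ne_zero hx0), mem_univ _⟩
    · intro y hy
      have hy0 : y ≠ 0 := (Finset.mem_erase.mp hy).1
      exact Finset.mem_erase.mpr ⟨mul_ne_zero hc (inv_ne_zero hy0), mem_univ _⟩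
    · intro x hx
      have hx0 : x ≠ 0 := (Finset.mem_erase.mp hx).1
      field_simp
    · intro y hy
      have hy0 : y ≠ 0 := (Finset.mem_erase.mp hy).1
      field_simp
    · intro x hx; rfl
  have step3 : ∑ y ∈ univ.erase (0 : ZMod p), χ (y - 1) = -χ (-1) := by
    have h1 : ∑ y : ZMod p, χ (y - 1) = ∑ z : ZMod p, χ z := by
      exact Fintype.sum_equiv (Equiv.subRight (1 : ZMod p)) _ _ (fun y => rfl)
    have h2 : ∑ y : ZMod p, χ (y - 1) = 0 := by
      rw [h1]; exact quadraticChar_sum_zero hchar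
    have this : χ (0 - 1) = χ (-1) := by norm_num
    have h3 : ∑ y : ZMod p, χ (y - 1)
        = χ (0 - 1) + ∑ y ∈ univ.erase (0 : ZMod p), χ (y - 1) :=
      (Finset.add_sum_erase _ _ (mem_univ (0 : ZMod p))).symm
    rw [h2, this] at h3
    linarith
  rw [step1, step2, step3]

open Finset in
private lemma pair_lemma (p : ℕ) [Fact p.Prime] (hp7 : 7 ≤ p) (α β c : ZMod p)
    (hα : α ≠ 0) (hβ : β ≠ 0) (hc : c ≠ 0) :
    ∃ s t : ZMod p, s ≠ 0 ∧ t ≠ 0 ∧ α * s^2 + β * t^2 = c := by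
  have hchar : ringChar (ZMod p) ≠ 2 := by rw [ZMod.ringChar_zmod_n]; omega
  have hval : ∀ u : ZMod p, 0 ≤ 1 + quadraticChar (ZMod p) u
      ∧ 1 + quadraticChar (ZMod p) u ≤ 2 := by
    intro u
    rcases eq_or_ne u 0 with rfl | hu
    · rw [quadraticChar_zero]; norm_num
    · rcases quadraticChar_dichotomy hu with h | h <;> rw [h] <;> norm_num
  have hF0 : ∀ x : ZMod p, 0 ≤ (1 + quadraticChar (ZMod p) (α⁻¹ * x)) *
      (1 + quadraticChar (ZMod p) (β⁻¹ * (c - x))) :=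
    fun x => mul_nonneg (hval _).1 (hval _).1
  have hsum2 : ∑ x : ZMod p, quadraticChar (ZMod p) (α⁻¹ * x) = 0 := by
    have := Fintype.sum_equiv (Equiv.mulLeft₀ α⁻¹ (inv_ne_zero hα))
      (fun x => quadraticChar (ZMod p) (α⁻¹ * x)) (fun y => quadraticChar (ZMod p) y)
      (fun x => rfl)
    exact this.trans (quadraticChar_sum_zero hchar)
  have hsum3 : ∑ x : ZMod p, quadraticChar (ZMod p) (β⁻¹ * (c - x)) = 0 := by
    have := Fintype.sum_equiv ((Equiv.subLeft c).trans (Equiv.mulLeft₀ β⁻¹ (inv_ne_zero hβ)))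
      (fun x => quadraticChar (ZMod p) (β⁻¹ * (c - x))) (fun y => quadraticChar (ZMod p) y)
      (fun x => rfl)
    exact this.trans (quadraticChar_sum_zero hchar)
  have hsum4 : ∑ x : ZMod p,
      quadraticChar (ZMod p) (α⁻¹ * x) * quadraticChar (ZMod p) (β⁻¹ * (c - x))
      = quadraticChar (ZMod p) (α⁻¹ * β⁻¹) * (-(quadraticChar (ZMod p)) (-1)) := by
    have key : ∀ x : ZMod p,
        quadraticChar (ZMod p) (α⁻¹ * x) * quadraticChar (ZMod p) (β⁻¹ * (c - x))
        = quadraticChar (ZMod p) (α⁻¹ * β⁻¹) * quadraticChar (ZMod p) (x * (c - x)) := by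
      intro x; rw [← map_mul, ← map_mul]; congr 1; ring
    rw [Finset.sum_congr rfl (fun x _ => key x), ← Finset.mul_sum, jacobi_aux p hp7 c hc]
  have hSF : ∑ x : ZMod p, (1 + quadraticChar (ZMod p) (α⁻¹ * x)) *
      (1 + quadraticChar (ZMod p) (β⁻¹ * (c - x)))
      = (p : ℤ) + quadraticChar (ZMod p) (α⁻¹ * β⁻¹) * (-(quadraticChar (ZMod p)) (-1)) := by
    have expand : ∀ x : ZMod p, (1 + quadraticChar (ZMod p) (α⁻¹ * x)) *
        (1 + quadraticChar (ZMod p) (β⁻¹ * (c - x)))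
        = 1 + quadraticChar (ZMod p) (α⁻¹ * x) + quadraticChar (ZMod p) (β⁻¹ * (c - x))
          + quadraticChar (ZMod p) (α⁻¹ * x) * quadraticChar (ZMod p) (β⁻¹ * (c - x)) := by
      intro x; ring
    rw [Finset.sum_congr rfl (fun x _ => expand x), Finset.sum_add_distrib,
      Finset.sum_add_distrib, Finset.sum_add_distrib, hsum2, hsum3, hsum4]
    simp [Finset.card_univ, ZMod.card]
  have hSlb : (p : ℤ) - 1 ≤ ∑ x : ZMod p, (1 + quadraticChar (ZMod p) (α⁻¹ * x)) *
      (1 + quadraticChar (ZMod p) (β⁻¹ * (c - x))) := by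
    have h1 : (-1 : ℤ) ≤ quadraticChar (ZMod p) (α⁻¹ * β⁻¹) * (-(quadraticChar (ZMod p)) (-1)) := by
      rcases quadraticChar_dichotomy (a := α⁻¹ * β⁻¹)
        (mul_ne_zero (inv_ne_zero hα) (inv_ne_zero hβ)) with h | h <;>
      rcases quadraticChar_dichotomy (a := (-1 : ZMod p))
        (neg_ne_zero.mpr one_ne_zero) with h' | h' <;>
      rw [h, h'] <;> norm_num
    linarith [hSF]
  have hkey : ∃ x : ZMod p, x ≠ 0 ∧ x ≠ c ∧ 0 < (1 + quadraticChar (ZMod p) (α⁻¹ * x)) *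
      (1 + quadraticChar (ZMod p) (β⁻¹ * (c - x))) := by
    by_contra hno
    push_neg at hno
    have hzero : ∀ x ∈ (univ : Finset (ZMod p)), x ∉ ({0, c} : Finset (ZMod p)) →
        (1 + quadraticChar (ZMod p) (α⁻¹ * x)) *
          (1 + quadraticChar (ZMod p) (β⁻¹ * (c - x))) = 0 := by
      intro x _ hx
      simp only [Finset.mem_insert, Finset.mem_singleton, not_or] at hx
      exact le_antisymm (hno x hx.1 hx.2) (hF0 x)
    have hsplit := Finset.sum_subset (Finset.subset_univ ({0, c} : Finset (ZMod p))) hzero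
    have hpair : ∑ x ∈ ({0, c} : Finset (ZMod p)), (1 + quadraticChar (ZMod p) (α⁻¹ * x)) *
        (1 + quadraticChar (ZMod p) (β⁻¹ * (c - x)))
        = (1 + quadraticChar (ZMod p) (α⁻¹ * 0)) *
          (1 + quadraticChar (ZMod p) (β⁻¹ * (c - 0)))
        + (1 + quadraticChar (ZMod p) (α⁻¹ * c)) *
          (1 + quadraticChar (ZMod p) (β⁻¹ * (c - c))) :=
      Finset.sum_pair (Ne.symm hc)
    have hF0le : (1 + quadraticChar (ZMod p) (α⁻¹ * 0)) *
        (1 + quadraticChar (ZMod p) (β⁻¹ * (c - 0))) ≤ 2 := by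
      rw [mul_zero, quadraticChar_zero]
      simpa using (hval (β⁻¹ * (c - 0))).2
    have hFcle : (1 + quadraticChar (ZMod p) (α⁻¹ * c)) *
        (1 + quadraticChar (ZMod p) (β⁻¹ * (c - c))) ≤ 2 := by
      rw [sub_self, mul_zero, quadraticChar_zero]
      simpa using (hval (α⁻¹ * c)).2
    have hp7' : (7 : ℤ) ≤ (p : ℤ) := by exact_mod_cast hp7
    linarith [hsplit, hpair, hSlb]
  obtain ⟨x, hx0, hxc, hFx⟩ := hkey
  have hf1 : quadraticChar (ZMod p) (α⁻¹ * x) = 1 := by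
    have hne : α⁻¹ * x ≠ 0 := mul_ne_zero (inv_ne_zero hα) hx0
    rcases quadraticChar_dichotomy hne with h | h
    · exact h
    · exfalso; rw [h] at hFx; simp at hFx
  have hf2 : quadraticChar (ZMod p) (β⁻¹ * (c - x)) = 1 := by
    have hne : β⁻¹ * (c - x) ≠ 0 :=
      mul_ne_zero (inv_ne_zero hβ) (sub_ne_zero.mpr (Ne.symm hxc))
    rcases quadraticChar_dichotomy hne with h | h
    · exact h
    · exfalso; rw [h] at hFx; simp at hFx
  obtain ⟨s, hs⟩ := (quadraticChar_one_iff_isSquare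
    (mul_ne_zero (inv_ne_zero hα) hx0)).mp hf1
  obtain ⟨t, ht⟩ := (quadraticChar_one_iff_isSquare
    (mul_ne_zero (inv_ne_zero hβ) (sub_ne_zero.mpr (Ne.symm hxc)))).mp hf2
  have hs0 : s ≠ 0 := by
    rintro rfl; rw [mul_zero] at hs
    exact mul_ne_zero (inv_ne_zero hα) hx0 hs
  have ht0 : t ≠ 0 := by
    rintro rfl; rw [mul_zero] at ht
    exact mul_ne_zero (inv_ne_zero hβ) (sub_ne_zero.mpr (Ne.symm hxc)) ht
  refine ⟨s, t, hs0, ht0, ?_⟩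
  have h1 : α * s^2 = x := by rw [sq, ← hs]; field_simp
  have h2 : β * t^2 = c - x := by rw [sq, ← ht]; field_simp
  rw [h1, h2]; ring

private lemma triple_lemma (p : ℕ) [Fact p.Prime] (hp7 : 7 ≤ p) (z₁ z₂ z₃ c : ZMod p)
    (h₁ : z₁ ≠ 0) (h₂ : z₂ ≠ 0) (h₃ : z₃ ≠ 0) :
    ∃ s₁ s₂ s₃ : ZMod p, s₁ ≠ 0 ∧ s₂ ≠ 0 ∧ s₃ ≠ 0 ∧
      z₁ * s₁^2 + z₂ * s₂^2 + z₃ * s₃^2 = c := by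
  have h2ne : (2 : ZMod p) ≠ 0 := by
    have : ((2 : ℕ) : ZMod p) ≠ 0 := by
      rw [Ne, ZMod.natCast_eq_zero_iff]
      intro h; have := Nat.le_of_dvd (by norm_num) h; omega
    simpa using this
  have h3ne : (3 : ZMod p) ≠ 0 := by
    have : ((3 : ℕ) : ZMod p) ≠ 0 := by
      rw [Ne, ZMod.natCast_eq_zero_iff]
      intro h; have := Nat.le_of_dvd (by norm_num) h; omega
    simpa using this
  have hu : ∃ u : ZMod p, u ≠ 0 ∧ c - z₃ * u^2 ≠ 0 := by
    by_cases h : c - z₃ * 1^2 ≠ 0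
    · exact ⟨1, one_ne_zero, h⟩
    · push_neg at h
      refine ⟨2, h2ne, ?_⟩
      have hc : c = z₃ := by linear_combination h
      rw [hc]
      intro habs
      have : z₃ * (1 - 2^2) = 0 := by linear_combination habs
      rcases mul_eq_zero.mp this with h' | h'
      · exact h₃ h'
      · have : (3 : ZMod p) = 0 := by linear_combination -h'
        exact h3ne this
  obtain ⟨u, hu0, hcu⟩ := hu
  obtain ⟨s, t, hs0, ht0, hst⟩ := pair_lemma p hp7 z₁ z₂ (c - z₃ * u^2) h₁ h₂ hcu
  exact ⟨s, t, u, hs0, ht0, hu0, by linear_combination hst⟩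


private lemma sqrt_lift (p : ℕ) (hp : p.Prime) (hodd : 2 < p) (a σ₀ : ℤ)
    (hσ₀ : ¬ (p : ℤ) ∣ σ₀) (hbase : (p : ℤ) ∣ σ₀ * σ₀ - a) :
    ∀ d : ℕ, 1 ≤ d → ∃ σ : ℤ, ¬ (p : ℤ) ∣ σ ∧ (p : ℤ)^d ∣ σ * σ - a := by
  intro d hd
  induction d with
  | zero => omega
  | succ d ih =>
    rcases Nat.eq_or_lt_of_le hd with h1 | h2
    · exact ⟨σ₀, hσ₀, by rw [← h1, pow_one]; exact hbase⟩
    · have hd1 : 1 ≤ d := by omega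
      obtain ⟨σ, hσ, hdvd⟩ := ih hd1
      obtain ⟨e, he⟩ := hdvd
      -- invert 2σ mod p
      have hp2 : ¬ (p : ℤ) ∣ 2 * σ := by
        intro h
        rcases ((Nat.prime_iff_prime_int.mp hp).2.2 2 σ h) with h' | h'
        · have := Int.le_of_dvd (by norm_num) h'
          omega
        · exact hσ h'
      have hcop : IsCoprime ((p : ℤ)) (2 * σ) :=
        (Prime.coprime_iff_not_dvd (Nat.prime_iff_prime_int.mp hp)).mpr hp2
      obtain ⟨u, w, huw⟩ := hcop
      -- u * p + w * (2σ) = 1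
      set t : ℤ := -e * w with ht
      refine ⟨σ + (p:ℤ)^d * t, ?_, ?_⟩
      · intro h
        apply hσ
        have : (p:ℤ) ∣ (p:ℤ)^d * t := Dvd.dvd.mul_right (dvd_pow_self _ (by omega)) t
        have h2 := dvd_sub h this
        simpa using h2
      · -- (σ + p^d t)^2 - a = p^d (e + 2σt) + p^{2d} t^2
        have key : (σ + (p:ℤ)^d * t) * (σ + (p:ℤ)^d * t) - a
            = (p:ℤ)^d * (e + 2*σ*t + (p:ℤ)^d * t * t) := by
          have hd2 : (p:ℤ)^d * (p:ℤ)^d = (p:ℤ)^(d+d) := by rw [← pow_add]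
          linear_combination he + ((p:ℤ)^d * t * t) * hd2
        rw [key, pow_succ]
        apply mul_dvd_mul_left
        -- p ∣ e + 2σt + p^d t t  since e + 2σt = e(1 - 2σw) - ... 
        have h3 : e + 2*σ*t = e * (u * (p:ℤ)) := by
          rw [ht]; linear_combination (-e) * huw
        have h4 : (p:ℤ) ∣ e + 2*σ*t := ⟨e * u, by linarith [h3]⟩
        have h5 : (p:ℤ) ∣ (p:ℤ)^d * t * t :=
          Dvd.dvd.mul_right (Dvd.dvd.mul_right (dvd_pow_self _ (by omega)) t) t
        exact dvd_add h4 h5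

private lemma lemC1 (p : ℕ) (hp : p.Prime) (hp7 : 7 ≤ p) (d : ℕ) (hd : 1 ≤ d)
    (T y₁ y₂ y₃ : ℤ) (h₁ : ¬(p:ℤ) ∣ y₁) (h₂ : ¬(p:ℤ) ∣ y₂) (h₃ : ¬(p:ℤ) ∣ y₃) :
    ∃ σ₁ σ₂ σ₃ : ℤ, ¬(p:ℤ) ∣ σ₁ ∧ ¬(p:ℤ) ∣ σ₂ ∧ ¬(p:ℤ) ∣ σ₃ ∧
      (p:ℤ)^d ∣ T + σ₁ * σ₁ * y₁ + σ₂ * σ₂ * y₂ + σ₃ * σ₃ * y₃ := by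
  haveI : Fact p.Prime := ⟨hp⟩
  have hz₁ : ((y₁ : ZMod p)) ≠ 0 := by
    rw [Ne, ZMod.intCast_zmod_eq_zero_iff_dvd]; exact h₁
  have hz₂ : ((y₂ : ZMod p)) ≠ 0 := by
    rw [Ne, ZMod.intCast_zmod_eq_zero_iff_dvd]; exact h₂
  have hz₃ : ((y₃ : ZMod p)) ≠ 0 := by
    rw [Ne, ZMod.intCast_zmod_eq_zero_iff_dvd]; exact h₃
  obtain ⟨s₁, s₂, s₃, hs₁, hs₂, hs₃, heq⟩ :=
    triple_lemma p hp7 (y₁ : ZMod p) (y₂ : ZMod p) (y₃ : ZMod p) (-(T : ZMod p)) hz₁ hz₂ hz₃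
  set σ₂ : ℤ := (s₂.val : ℤ) with hσ₂def
  set σ₃ : ℤ := (s₃.val : ℤ) with hσ₃def
  have hc₂ : ((σ₂ : ℤ) : ZMod p) = s₂ := by
    rw [hσ₂def, Int.cast_natCast]; exact ZMod.natCast_rightInverse s₂
  have hc₃ : ((σ₃ : ℤ) : ZMod p) = s₃ := by
    rw [hσ₃def, Int.cast_natCast]; exact ZMod.natCast_rightInverse s₃
  have hσ₂ : ¬ (p:ℤ) ∣ σ₂ := by
    rw [← ZMod.intCast_zmod_eq_zero_iff_dvd, hc₂]; exact hs₂
  have hσ₃ : ¬ (p:ℤ) ∣ σ₃ := by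
    rw [← ZMod.intCast_zmod_eq_zero_iff_dvd, hc₃]; exact hs₃
  set R : ℤ := -(T + σ₂ * σ₂ * y₂ + σ₃ * σ₃ * y₃) with hR
  -- invert y₁ mod p^d
  have hcop : IsCoprime ((p:ℤ)^d) y₁ :=
    (((Prime.coprime_iff_not_dvd (Nat.prime_iff_prime_int.mp hp)).mpr h₁)).pow_left
  obtain ⟨v, w, hwv⟩ := hcop
  -- v * p^d + w * y₁ = 1
  have hwy : (w : ZMod p) * (y₁ : ZMod p) = 1 := by
    have := congrArg (fun z : ℤ => (z : ZMod p)) hwv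
    push_cast at this
    rw [ZMod.natCast_self, zero_pow (by omega : d ≠ 0)] at this
    linear_combination this
  have hRcast : ((R : ℤ) : ZMod p) = (y₁ : ZMod p) * s₁^2 := by
    rw [hR]
    push_cast [hc₂, hc₃]
    linear_combination -heq
  -- a := R * w ; base sqrt
  have hacast : ((R * w : ℤ) : ZMod p) = s₁ * s₁ := by
    push_cast [hRcast]
    linear_combination s₁^2 * hwy
  have hσ₀ : ¬ (p:ℤ) ∣ (s₁.val : ℤ) := by
    rw [← ZMod.intCast_zmod_eq_zero_iff_dvd, Int.cast_natCast]
    rw [show ((s₁.val : ℕ) : ZMod p) = s₁ from ZMod.natCast_rightInverse s₁]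
    exact hs₁
  have hbase : (p:ℤ) ∣ (s₁.val : ℤ) * (s₁.val : ℤ) - R * w := by
    rw [← ZMod.intCast_zmod_eq_zero_iff_dvd]
    push_cast [hacast]
    rw [show ((s₁.val : ℕ) : ZMod p) = s₁ from ZMod.natCast_rightInverse s₁]
    ring
  obtain ⟨σ₁, hσ₁, hlift⟩ := sqrt_lift p hp (by omega) (R * w) (s₁.val : ℤ) hσ₀ hbase d hd
  refine ⟨σ₁, σ₂, σ₃, hσ₁, hσ₂, hσ₃, ?_⟩
  have key : T + σ₁ * σ₁ * y₁ + σ₂ * σ₂ * y₂ + σ₃ * σ₃ * y₃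
      = (σ₁ * σ₁ - R * w) * y₁ + R * (w * y₁ - 1) := by rw [hR]; ring
  rw [key]
  have hd1 : (p:ℤ)^d ∣ (σ₁ * σ₁ - R * w) * y₁ := Dvd.dvd.mul_right hlift y₁
  have hd2 : (p:ℤ)^d ∣ R * (w * y₁ - 1) := by
    have hw1 : w * y₁ - 1 = -(v * (p:ℤ)^d) := by linear_combination hwv
    rw [hw1]
    exact ⟨-(R*v), by ring⟩
  exact dvd_add hd1 hd2

private def GoodP (p c : ℕ) (X : List ℤ) : Prop :=
  ∃ v, v ≤ c ∧ (∀ y ∈ X, (p:ℤ)^v ∣ y) ∧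
    (v = c ∨ WChain 3 (fun y => ¬ (p:ℤ)^(v+1) ∣ y) X)

private def Good (n : ℕ) (X : List ℤ) : Prop :=
  ∀ p : ℕ, p.Prime → p ∣ n → GoodP p (n.factorization p) X

private lemma lemC (p c : ℕ) (hp : p.Prime) (hp7 : 7 ≤ p) (X : List ℤ)
    (h : GoodP p c X) :
    ∃ s : List ℤ, s.length = X.length ∧ (∀ w ∈ s, ¬ (p:ℤ) ∣ w) ∧
      (p:ℤ)^c ∣ wsum s X := by
  obtain ⟨v, hvc, hdivAll, hor⟩ := h
  have hp2 : (2:ℤ) ≤ (p:ℤ) := by exact_mod_cast hp.two_le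
  have hone : ¬ (p:ℤ) ∣ (1:ℤ) := by
    intro hh; have := Int.le_of_dvd one_pos hh; omega
  have htriv : v = c → ∃ s : List ℤ, s.length = X.length ∧ (∀ w ∈ s, ¬ (p:ℤ) ∣ w) ∧
      (p:ℤ)^c ∣ wsum s X := by
    rintro rfl
    refine ⟨List.replicate X.length 1, by simp, ?_, ?_⟩
    · intro w hw; rw [List.eq_of_mem_replicate hw]; exact hone
    · rw [wsum_replicate_one]; exact List.dvd_sum hdivAll
  rcases eq_or_ne v c with rfl | hvm
  · exact htriv rfl
  rcases hor with h | hch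
  · exact htriv h
  have hvlt : v < c := lt_of_le_of_ne hvc hvm
  have hd : 1 ≤ c - v := by omega
  obtain ⟨A, b₁, R₁, hX1, hb₁, hch2⟩ := hch
  obtain ⟨B, b₂, R₂, hR1, hb₂, hch3⟩ := hch2
  obtain ⟨C, b₃, R₃, hR2, hb₃, -⟩ := hch3
  -- memberships
  have hmem : ∀ y, y ∈ A ∨ y = b₁ ∨ y ∈ B ∨ y = b₂ ∨ y ∈ C ∨ y = b₃ ∨ y ∈ R₃ → y ∈ X := by
    intro y hy
    rw [hX1, hR1, hR2] at *
    rcases hy with h | h | h | h | h | h | h <;> simp [h]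
  have hdA : ∀ y ∈ A, (p:ℤ)^v ∣ y := fun y hy => hdivAll y (hmem y (Or.inl hy))
  have hdB : ∀ y ∈ B, (p:ℤ)^v ∣ y := fun y hy => hdivAll y (hmem y (by tauto))
  have hdC : ∀ y ∈ C, (p:ℤ)^v ∣ y := fun y hy => hdivAll y (hmem y (by tauto))
  have hdR : ∀ y ∈ R₃, (p:ℤ)^v ∣ y := fun y hy => hdivAll y (hmem y (by tauto))
  obtain ⟨y₁, hy₁⟩ := hdivAll b₁ (hmem b₁ (by tauto))
  obtain ⟨y₂, hy₂⟩ := hdivAll b₂ (hmem b₂ (by tauto))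
  obtain ⟨y₃, hy₃⟩ := hdivAll b₃ (hmem b₃ (by tauto))
  have hpow : (0:ℤ) < (p:ℤ)^v := pow_pos (by omega) v
  have hnd : ∀ b y : ℤ, b = (p:ℤ)^v * y → ¬ (p:ℤ)^(v+1) ∣ b → ¬ (p:ℤ) ∣ y := by
    intro b y hb hnb hdy
    apply hnb
    rw [hb, pow_succ]
    exact mul_dvd_mul_left _ hdy
  have hy₁' : ¬ (p:ℤ) ∣ y₁ := hnd _ _ hy₁ hb₁
  have hy₂' : ¬ (p:ℤ) ∣ y₂ := hnd _ _ hy₂ hb₂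
  have hy₃' : ¬ (p:ℤ) ∣ y₃ := hnd _ _ hy₃ hb₃
  obtain ⟨T, hT⟩ : (p:ℤ)^v ∣ (A.sum + B.sum + C.sum + R₃.sum) := by
    apply dvd_add; apply dvd_add; apply dvd_add
    all_goals exact List.dvd_sum ‹_›
  obtain ⟨σ₁, σ₂, σ₃, hσ₁, hσ₂, hσ₃, hdvd⟩ :=
    lemC1 p hp hp7 (c - v) hd T y₁ y₂ y₃ hy₁' hy₂' hy₃'
  refine ⟨List.replicate A.length 1 ++ σ₁ :: (List.replicate B.length 1 ++ σ₂ ::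
    (List.replicate C.length 1 ++ σ₃ :: List.replicate R₃.length 1)), ?_, ?_, ?_⟩
  · simp [hX1, hR1, hR2]
  · intro w hw
    simp only [List.mem_append, List.mem_cons] at hw
    rcases hw with h | h | h | h | h | h | h <;>
      first
      | (rw [List.eq_of_mem_replicate h]; exact hone)
      | (rw [h]; assumption)
  · have hws : wsum (List.replicate A.length 1 ++ σ₁ :: (List.replicate B.length 1 ++ σ₂ ::
        (List.replicate C.length 1 ++ σ₃ :: List.replicate R₃.length 1))) X
        = A.sum + σ₁ * σ₁ * b₁ + (B.sum + σ₂ * σ₂ * b₂ + (C.sum + σ₃ * σ₃ * b₃ + R₃.sum)) := by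
      rw [hX1, hR1, hR2]
      rw [wsum_append _ _ (by simp), wsum_replicate_one, wsum_cons,
        wsum_append _ _ (by simp), wsum_replicate_one, wsum_cons,
        wsum_append _ _ (by simp), wsum_replicate_one, wsum_cons, wsum_replicate_one]
      ring
    rw [hws]
    have hsplit : A.sum + σ₁ * σ₁ * b₁ + (B.sum + σ₂ * σ₂ * b₂ + (C.sum + σ₃ * σ₃ * b₃ + R₃.sum))
        = (p:ℤ)^v * (T + σ₁ * σ₁ * y₁ + σ₂ * σ₂ * y₂ + σ₃ * σ₃ * y₃) := by
      rw [hy₁, hy₂, hy₃] at *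
      linear_combination hT
    rw [hsplit, show c = v + (c - v) by omega, pow_add]
    exact mul_dvd_mul_left _ hdvd

private lemma wchain_map {P Q : ℤ → Prop} (f : ℤ → ℤ)
    (hPQ : ∀ y, P y → Q (f y)) :
    ∀ (m : ℕ) (X : List ℤ), WChain m P X → WChain m Q (X.map f) := by
  intro m
  induction m with
  | zero => intro X _; trivial
  | succ m ih =>
    rintro X ⟨A, b, R, rfl, hPb, hc⟩
    exact ⟨A.map f, f b, R.map f, by simp, hPQ b hPb, ih R hc⟩

private lemma goodLift (n p w : ℕ) (hp : p.Prime) (hn : n ≠ 0) (hw : 1 ≤ w)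
    (hwc : w ≤ n.factorization p) (X' : List ℤ) (h : Good (n / p^w) X') :
    Good n (X'.map (fun z => (p:ℤ)^w * z)) := by
  have hpw_dvd : p^w ∣ n := dvd_trans (pow_dvd_pow p hwc) (Nat.ordProj_dvd n p)
  have hmul : (n / p^w) * p^w = n := Nat.div_mul_cancel hpw_dvd
  have hn'0 : n / p^w ≠ 0 := by
    intro h0; rw [h0, zero_mul] at hmul; exact hn hmul.symm
  have hpne : ((p:ℤ))^w ≠ 0 := pow_ne_zero _ (by exact_mod_cast hp.pos.ne')
  have hfact : ∀ q : ℕ, n.factorization q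
      = (n / p^w).factorization q + (p^w).factorization q := by
    intro q
    conv_lhs => rw [← hmul]
    rw [Nat.factorization_mul hn'0 (pow_ne_zero w hp.pos.ne')]
    simp
  intro q hq hqn
  have hfq : (p^w).factorization = Finsupp.single p w := hp.factorization_pow
  rcases eq_or_ne q p with hq' | hqp
  · subst hq'
    have hcp : n.factorization q = (n / q^w).factorization q + w := by
      rw [hfact q, hfq]; simp
    rcases Nat.eq_zero_or_pos ((n / q^w).factorization q) with hzero | hpos
    · refine ⟨n.factorization q, le_refl _, ?_, Or.inl rfl⟩
      intro y hy
      obtain ⟨z, _, rfl⟩ := List.mem_map.mp hy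
      rw [hcp, hzero, zero_add]
      exact Dvd.dvd.mul_right dvd_rfl z
    · have hqn' : q ∣ n / q^w := Nat.dvd_of_factorization_pos hpos.ne'
      obtain ⟨v', hv'c, hdiv, hor⟩ := h q hq hqn'
      refine ⟨v' + w, by omega, ?_, ?_⟩
      · intro y hy
        obtain ⟨z, hz, rfl⟩ := List.mem_map.mp hy
        rw [pow_add, mul_comm ((q:ℤ)^v') _]
        exact mul_dvd_mul_left _ (hdiv z hz)
      · rcases hor with hl | hr
        · exact Or.inl (by omega)
        · refine Or.inr (wchain_map _ ?_ _ _ hr)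
          intro z hz hdvd
          apply hz
          rw [show v' + w + 1 = (v' + 1) + w by omega, pow_add,
            mul_comm ((q:ℤ)^(v'+1)) _] at hdvd
          exact (mul_dvd_mul_iff_left hpne).mp hdvd
  · have hfq0 : (p^w).factorization q = 0 := by
      rw [hfq, Finsupp.single_apply, if_neg (fun he => hqp he.symm)]
    have hcq : n.factorization q = (n / p^w).factorization q := by
      rw [hfact q, hfq0, add_zero]
    have hqn' : q ∣ n / p^w := by
      have hdm : q ∣ (n / p^w) * p^w := hmul.symm ▸ hqn
      rcases (Nat.Prime.dvd_mul hq).mp hdm with h' | h'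
      · exact h'
      · exact absurd ((Nat.prime_dvd_prime_iff_eq hq hp).mp (hq.dvd_of_dvd_pow h')) hqp
    obtain ⟨v', hv'c, hdiv, hor⟩ := h q hq hqn'
    have hcop : IsCoprime ((q:ℤ)^(v'+1)) ((p:ℤ)^w) := by
      apply IsCoprime.pow
      rw [Prime.coprime_iff_not_dvd (Nat.prime_iff_prime_int.mp hq)]
      intro hd
      exact hqp ((Nat.prime_dvd_prime_iff_eq hq hp).mp (by exact_mod_cast hd))
    refine ⟨v', by omega, ?_, ?_⟩
    · intro y hy
      obtain ⟨z, hz, rfl⟩ := List.mem_map.mp hy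
      exact Dvd.dvd.mul_left (hdiv z hz) _
    · rcases hor with hl | hr
      · exact Or.inl (by omega)
      · refine Or.inr (wchain_map _ ?_ _ _ hr)
        intro z hz hdvd
        exact hz (hcop.dvd_of_dvd_mul_left hdvd)

private lemma omega_split (n p w : ℕ) (hp : p.Prime) (hn : n ≠ 0) (hdvd : p^w ∣ n) :
    (n / p^w).primeFactorsList.length + w = n.primeFactorsList.length := by
  have hn'0 : n / p^w ≠ 0 := by
    have := Nat.div_pos (Nat.le_of_dvd (Nat.pos_of_ne_zero hn) hdvd)
      (pow_pos hp.pos w)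
    omega
  have hmul : (n / p^w) * p^w = n := Nat.div_mul_cancel hdvd
  have hperm := Nat.perm_primeFactorsList_mul hn'0 (pow_ne_zero w hp.pos.ne')
  have hlen := hperm.length_eq
  rw [hmul, List.length_append, hp.primeFactorsList_pow, List.length_replicate] at hlen
  omega

private lemma lemD : ∀ n : ℕ, n ≠ 0 → ∀ L : List ℤ,
    3 ^ n.primeFactorsList.length ≤ L.length →
    ∃ i k, i + k ≤ L.length ∧ 1 ≤ k ∧ Good n ((L.drop i).take k) := by
  intro n
  induction n using Nat.strong_induction_on with
  | _ n ih =>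
    intro hn L hL
    have hL1 : 1 ≤ L.length := le_trans (Nat.one_le_pow _ _ (by norm_num)) hL
    by_cases hall : ∀ p : ℕ, p.Prime → p ∣ n → GoodP p (n.factorization p) L
    · refine ⟨0, L.length, by omega, hL1, ?_⟩
      intro p hp hpn
      rw [List.drop_zero, List.take_length]
      exact hall p hp hpn
    · push_neg at hall
      obtain ⟨p, hp, hpn, hbad⟩ := hall
      have hc1 : 1 ≤ n.factorization p := hp.factorization_pos_of_dvd hn hpn
      set c := n.factorization p with hcdef
      set P : ℕ → Prop := fun j => ∀ y ∈ L, (p:ℤ)^j ∣ y with hPdef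
      haveI : DecidablePred P := Classical.decPred P
      set v := Nat.findGreatest P c with hvdef
      have hP0 : P 0 := by intro y _; simpa using one_dvd y
      have hPv : P v := Nat.findGreatest_spec (Nat.zero_le c) hP0
      have hvc : v ≤ c := Nat.findGreatest_le c
      have hvlt : v < c := by
        rcases eq_or_lt_of_le hvc with he | hlt
        · exact absurd ⟨v, hvc, hPv, Or.inl he⟩ hbad
        · exact hlt
      have hnch : ¬ WChain 3 (fun y => ¬ (p:ℤ)^(v+1) ∣ y) L :=
        fun hch => hbad ⟨v, hvc, hPv, Or.inr hch⟩
      obtain ⟨i, k, hik, hbound, hfree⟩ :=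
        splitAux (fun y => ¬ (p:ℤ)^(v+1) ∣ y) 2 L hnch
      have hSdiv : ∀ y ∈ (L.drop i).take k, (p:ℤ)^(v+1) ∣ y := by
        intro y hy
        by_contra hnd
        exact hfree y hy hnd
      set S := (L.drop i).take k with hSdef
      have hSlen : S.length = k := by
        rw [hSdef, List.length_take, List.length_drop]
        omega
      set S' := S.map (fun y => y / (p:ℤ)^(v+1)) with hS'def
      have hSS' : S'.map (fun z => (p:ℤ)^(v+1) * z) = S := by
        rw [hS'def, List.map_map]
        have : ∀ y ∈ S, ((fun z => (p:ℤ)^(v+1) * z) ∘ (fun y => y / (p:ℤ)^(v+1))) y = id y := by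
          intro y hy
          exact Int.mul_ediv_cancel' (hSdiv y hy)
        rw [List.map_congr_left this, List.map_id]
      have hpvdvd : p^(v+1) ∣ n :=
        dvd_trans (pow_dvd_pow p (by omega)) (Nat.ordProj_dvd n p)
      set n₂ := n / p^(v+1) with hn₂def
      have homega := omega_split n p (v+1) hp hn hpvdvd
      rw [← hn₂def] at homega
      have hn₂0 : n₂ ≠ 0 := by
        have := Nat.div_pos (Nat.le_of_dvd (Nat.pos_of_ne_zero hn) hpvdvd)
          (pow_pos hp.pos (v+1))
        omega
      have hn₂lt : n₂ < n :=
        Nat.div_lt_self (Nat.pos_of_ne_zero hn)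
          (Nat.one_lt_pow (by omega) hp.one_lt)
      have hk3 : 3 ^ n₂.primeFactorsList.length ≤ k := by
        have h1 : 3 ^ (n₂.primeFactorsList.length + (v+1)) ≤ L.length := by
          rw [homega]; exact hL
        have h2 : 3 ^ n₂.primeFactorsList.length * 3
            ≤ 3 ^ (n₂.primeFactorsList.length + (v+1)) := by
          rw [pow_add]
          apply Nat.mul_le_mul_left
          calc (3:ℕ) = 3^1 := (pow_one 3).symm
            _ ≤ 3^(v+1) := Nat.pow_le_pow_right (by norm_num) (by omega)
        omega
      have hS'len : S'.length = k := by rw [hS'def, List.length_map, hSlen]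
      obtain ⟨i₂, k₂, hik₂, hk₂1, hGood₂⟩ := ih n₂ hn₂lt hn₂0 S' (by rw [hS'len]; exact hk3)
      rw [hS'len] at hik₂
      refine ⟨i + i₂, k₂, by omega, hk₂1, ?_⟩
      have hinter : (L.drop (i + i₂)).take k₂ = (S.drop i₂).take k₂ := by
        rw [hSdef, List.drop_take, List.drop_drop, List.take_take,
          min_eq_left (by omega)]
      have hmapint : (S.drop i₂).take k₂
          = ((S'.drop i₂).take k₂).map (fun z => (p:ℤ)^(v+1) * z) := by
        rw [← hSS', ← List.map_drop, ← List.map_take]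
      rw [hinter, hmapint]
      exact goodLift n p (v+1) hp hn (by omega) (by omega) _ hGood₂

private lemma lemE : ∀ n : ℕ, n ≠ 0 → (∀ r : ℕ, r.Prime → r ∣ n → 7 ≤ r) →
    ∀ X : List ℤ, Good n X →
    ∃ s : List ℤ, s.length = X.length ∧ (∀ w ∈ s, IsCoprime w (n:ℤ)) ∧
      (n:ℤ) ∣ wsum s X := by
  intro n
  induction n using Nat.strong_induction_on with
  | _ n ih =>
    intro hn hdiv X hGood
    rcases eq_or_ne n 1 with rfl | hn1
    · exact ⟨List.replicate X.length 1, by simp,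
        fun w hw => by rw [List.eq_of_mem_replicate hw]; exact isCoprime_one_left,
        by simp⟩
    set p := n.minFac with hpdef
    have hp : p.Prime := Nat.minFac_prime hn1
    have hpn : p ∣ n := Nat.minFac_dvd n
    have hp7 : 7 ≤ p := hdiv p hp hpn
    set c := n.factorization p with hcdef
    have hc1 : 1 ≤ c := hp.factorization_pos_of_dvd hn hpn
    set q := p ^ c with hqdef
    set m := n / q with hmdef
    have hqm : q * m = n := Nat.ordProj_mul_ordCompl_eq_self n p
    have hcop : Nat.Coprime q m := Nat.Coprime.pow_left c (Nat.coprime_ordCompl hp hn)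
    have hm0 : m ≠ 0 := (Nat.ordCompl_pos p hn).ne'
    have hq2 : 2 ≤ q := by
      have : p ≤ p ^ c := Nat.le_self_pow (by omega) p
      omega
    have hmlt : m < n := Nat.div_lt_self (Nat.pos_of_ne_zero hn) (by omega)
    have hdivm : ∀ r, r.Prime → r ∣ m → 7 ≤ r :=
      fun r hr hrm => hdiv r hr (hrm.trans (Nat.ordCompl_dvd n p))
    have hGoodm : Good m X := by
      intro r hr hrm
      have hrp : r ≠ p := by
        intro he
        subst he
        rw [hmdef, hqdef, hcdef] at hrm
        exact Nat.not_dvd_ordCompl hp hn hrm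
      have hfm : m.factorization r = n.factorization r := by
        rw [hmdef, hqdef, hcdef, Nat.factorization_ordCompl n p, Finsupp.erase_ne hrp]
      rw [hfm]
      exact hGood r hr (hrm.trans (Nat.ordCompl_dvd n p))
    obtain ⟨sm, hsmlen, hsmcop, hsmdvd⟩ := ih m hmlt hm0 hdivm X hGoodm
    obtain ⟨sq, hsqlen, hsqcop, hsqdvd⟩ := lemC p c hp hp7 X (hGood p hp hpn)
    have hiso : IsCoprime (q:ℤ) (m:ℤ) := Nat.isCoprime_iff_coprime.mpr hcop
    obtain ⟨u, v, huv⟩ := hiso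
    set crt : ℤ → ℤ → ℤ := fun a b => a * (v * (m:ℤ)) + b * (u * (q:ℤ)) with hcrt
    have hqcast : ((q:ℕ):ℤ) = (p:ℤ)^c := by rw [hqdef]; push_cast; ring
    refine ⟨List.zipWith crt sq sm, ?_, ?_, ?_⟩
    · rw [List.length_zipWith, hsqlen, hsmlen, min_self]
    · intro w hw
      obtain ⟨a, b, ha, hb, rfl⟩ := mem_zipWith hw
      have hac : IsCoprime a ((p:ℤ)) :=
        ((Prime.coprime_iff_not_dvd (Nat.prime_iff_prime_int.mp hp)).mpr
          (hsqcop a ha)).symm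
      have haq : IsCoprime (crt a b) (q:ℤ) := by
        have h1 : IsCoprime a ((q:ℤ)) := by rw [hqcast]; exact hac.pow_right
        have heq : crt a b = a + (q:ℤ) * (u * (b - a)) := by
          rw [hcrt]; linear_combination a * huv
        rw [heq]
        exact h1.add_mul_left_left _
      have ham : IsCoprime (crt a b) (m:ℤ) := by
        have heq : crt a b = b + (m:ℤ) * (v * (a - b)) := by
          rw [hcrt]; linear_combination b * huv
        rw [heq]
        exact (hsmcop b hb).add_mul_left_left _
      have hfin : IsCoprime (crt a b) ((q*m : ℕ):ℤ) := by
        push_cast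
        exact haq.mul_right ham
      rw [hqm] at hfin
      exact hfin
    · have hd1 : (q:ℤ) ∣ wsum (List.zipWith crt sq sm) X - wsum sq X := by
        apply dvd_wsum_sub _ crt ?_ sq sm X hsqlen hsmlen
        intro a b
        exact ⟨u * (b - a), by rw [hcrt]; linear_combination a * huv⟩
      have hcomm : List.zipWith crt sq sm = List.zipWith (fun b a => crt a b) sm sq :=
        List.zipWith_comm
      have hd2 : (m:ℤ) ∣ wsum (List.zipWith crt sq sm) X - wsum sm X := by
        rw [hcomm]
        apply dvd_wsum_sub _ (fun b a => crt a b) ?_ sm sq X hsmlen hsqlen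
        intro b a
        exact ⟨v * (a - b), by rw [hcrt]; linear_combination b * huv⟩
      have hqd : (q:ℤ) ∣ wsum (List.zipWith crt sq sm) X := by
        have h2 : (q:ℤ) ∣ wsum sq X := by rw [hqcast]; exact hsqdvd
        have := dvd_add hd1 h2
        simpa using this
      have hmd : (m:ℤ) ∣ wsum (List.zipWith crt sq sm) X := by
        have := dvd_add hd2 hsmdvd
        simpa using this
      have hiso2 : IsCoprime (q:ℤ) (m:ℤ) := ⟨u, v, huv⟩
      have hfin : ((q*m : ℕ):ℤ) ∣ wsum (List.zipWith crt sq sm) X := by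
        push_cast
        exact hiso2.mul_dvd hqd hmd
      rw [hqm] at hfin
      exact hfin

private lemma castWsum (n : ℕ) [NeZero n] :
    ∀ (s : List ℤ) (Y : List (ZMod n)), s.length = Y.length →
      (List.zipWith (· * ·) (s.map (fun w : ℤ => ((w : ZMod n))^2)) Y).sum
        = ((wsum s (Y.map (fun z => (z.val : ℤ))) : ℤ) : ZMod n) := by
  intro s
  induction s with
  | nil => intro Y h; simp [wsum]
  | cons a s ih =>
    intro Y h
    cases Y with
    | nil => simp at h
    | cons z Y =>
      simp only [List.map_cons, List.zipWith_cons_cons, List.sum_cons]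
      rw [wsum_cons, ih Y (by simpa using h)]
      have hzv : ((z.val : ℤ) : ZMod n) = z := by
        push_cast
        rw [ZMod.natCast_val, ZMod.cast_id]
      push_cast [hzv]
      ring


/-- If every prime divisor of `n ≥ 2` is at least `7`, then every sequence
of length `3^{Ω(n)}` in `Z_n` has a nonempty consecutive `U(n)²`-weighted zero-sum
subsequence, i.e. `C_{U(n)²}(n) ≤ 3^{Ω(n)}`. -/
theorem C_squares_upper_bound (n : ℕ) (hn : 2 ≤ n)
    (hdiv : ∀ p : ℕ, p.Prime → p ∣ n → 7 ≤ p) :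
    ∀ L : List (ZMod n), L.length = 3 ^ n.primeFactorsList.length →
      HasConsecWZS {x : ZMod n | ∃ u : (ZMod n)ˣ, (u : ZMod n) ^ 2 = x} L := by
  intro L hL
  haveI : NeZero n := ⟨by omega⟩
  set Lz : List ℤ := L.map (fun z => (z.val : ℤ)) with hLz
  have hLzlen : Lz.length = L.length := by rw [hLz, List.length_map]
  obtain ⟨i, k, hik, hk1, hGood⟩ := lemD n (by omega) Lz (by rw [hLzlen, hL])
  obtain ⟨s, hslen, hscop, hsdvd⟩ := lemE n (by omega) hdiv _ hGood
  have hXmap : (Lz.drop i).take k = ((L.drop i).take k).map (fun z => (z.val : ℤ)) := by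
    rw [hLz, ← List.map_drop, ← List.map_take]
  have hl₂len : ((L.drop i).take k).length = k := by
    rw [List.length_take, List.length_drop]
    omega
  refine ⟨L.take i, (L.drop i).take k, L.drop (i+k), ?_, ?_, ?_⟩
  · have h1 : (L.drop i).drop k = L.drop (i + k) := by
      rw [List.drop_drop, Nat.add_comm]
    rw [List.append_assoc, ← h1, List.take_append_drop, List.take_append_drop]
  · intro he
    rw [he] at hl₂len
    simp at hl₂len
    omega
  · refine ⟨s.map (fun w : ℤ => ((w : ZMod n))^2), ?_, ?_, ?_⟩
    · rw [List.length_map, hslen, hXmap, List.length_map]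
    · intro w hw
      obtain ⟨a, ha, rfl⟩ := List.mem_map.mp hw
      obtain ⟨x, y, hxy⟩ := hscop a ha
      have hmul : (x : ZMod n) * (a : ZMod n) = 1 := by
        have hcast := congrArg (fun t : ℤ => (t : ZMod n)) hxy
        push_cast at hcast
        rw [ZMod.natCast_self] at hcast
        simpa using hcast
      have hu : IsUnit ((a:ℤ) : ZMod n) :=
        isUnit_iff_exists_inv.mpr ⟨(x : ZMod n), by rw [mul_comm]; exact hmul⟩
      exact ⟨hu.unit, by rw [IsUnit.unit_spec]⟩
    · rw [castWsum n s ((L.drop i).take k) (by rw [hslen, hXmap, List.length_map]),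
        ← hXmap]
      exact (ZMod.intCast_zmod_eq_zero_iff_dvd _ n).mpr hsdvd
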